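/- The deterministic dynamic programming principle: for the value function V(t,x_t) = inf over measurable controls θ : [t,T] → U of ∫_t^T f(s, X^{t,x_t;θ}_s, θ(s)) ds + G(X^{t,x_t;θ}_T), and any t ≤ t̂ ≤ T, one has V(t,x_t) = inf_θ { ∫_t^{t̂} f(s, X^{t,x_t;θ}_s, θ(s)) ds + V(t̂, X^{t,x_t;θ}_{t̂}) }. -/

import Mathlib

open Set MeasureTheory

/-- The cost set whose infimum is the value function `V(a, y)`. -/
private def dppSet {T : ℝ} {d m : ℕ} (U : Set (EuclideanSpace ℝ (Fin m)))
    (β : ℝ → C(Set.Icc (0:ℝ) T, EuclideanSpace ℝ (Fin d)) → EuclideanSpace ℝ (Fin m) →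
      EuclideanSpace ℝ (Fin d))
    (f : ℝ → C(Set.Icc (0:ℝ) T, EuclideanSpace ℝ (Fin d)) → EuclideanSpace ℝ (Fin m) → ℝ)
    (G : C(Set.Icc (0:ℝ) T, EuclideanSpace ℝ (Fin d)) → ℝ)
    (a : Set.Icc (0:ℝ) T) (y : C(Set.Icc (0:ℝ) T, EuclideanSpace ℝ (Fin d))) : Set ℝ :=
  {c : ℝ | ∃ (θ : ℝ → EuclideanSpace ℝ (Fin m))
      (X : C(Set.Icc (0:ℝ) T, EuclideanSpace ℝ (Fin d))),
      (Measurable θ ∧ ∀ s, θ s ∈ U) ∧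
      ((∀ u : Set.Icc (0:ℝ) T, (u:ℝ) ≤ (a:ℝ) → X u = y u) ∧
        ∀ τ : Set.Icc (0:ℝ) T, (a:ℝ) ≤ (τ:ℝ) →
          X τ = y a + ∫ s' in (a:ℝ)..(τ:ℝ), β s' X (θ s')) ∧
      c = (∫ s' in (a:ℝ)..T, f s' X (θ s')) + G X}

/-- the deterministic dynamic programming principle.  For the value
function `V(t,x_t) = inf_θ { ∫_t^T f(s, X^{t,x_t;θ}_s, θ(s)) ds + G(X^{t,x_t;θ}_T) }`
over measurable `U`-valued controls, and any `t ≤ t̂ ≤ T`,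
`V(t,x_t) = inf_θ { ∫_t^{t̂} f(s, X^{t,x_t;θ}_s, θ(s)) ds + V(t̂, X^{t,x_t;θ}_{t̂}) }`. -/
theorem stmt_14 (T L : ℝ) (hT : 0 < T) (hL : 0 < L) (d m : ℕ)
    (U : Set (EuclideanSpace ℝ (Fin m))) (hU : U.Nonempty)
    (β : ℝ → C(Set.Icc (0:ℝ) T, EuclideanSpace ℝ (Fin d)) → EuclideanSpace ℝ (Fin m) →
      EuclideanSpace ℝ (Fin d))
    (f : ℝ → C(Set.Icc (0:ℝ) T, EuclideanSpace ℝ (Fin d)) → EuclideanSpace ℝ (Fin m) → ℝ)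
    (G : C(Set.Icc (0:ℝ) T, EuclideanSpace ℝ (Fin d)) → ℝ)
    (hβmeas : ∀ x (θ : ℝ → EuclideanSpace ℝ (Fin m)), Measurable θ →
      Measurable fun s => β s x (θ s))
    (hfmeas : ∀ x (θ : ℝ → EuclideanSpace ℝ (Fin m)), Measurable θ →
      Measurable fun s => f s x (θ s))
    (hβna : ∀ s ∈ Set.Icc (0:ℝ) T, ∀ v ∈ U, ∀ x y,
      (∀ u : Set.Icc (0:ℝ) T, (u:ℝ) ≤ s → x u = y u) → β s x v = β s y v)
    (hfna : ∀ s ∈ Set.Icc (0:ℝ) T, ∀ v ∈ U, ∀ x y,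
      (∀ u : Set.Icc (0:ℝ) T, (u:ℝ) ≤ s → x u = y u) → f s x v = f s y v)
    (hβbd : ∀ s ∈ Set.Icc (0:ℝ) T, ∀ x, ∀ v ∈ U, ‖β s x v‖ ≤ L)
    (hfbd : ∀ s ∈ Set.Icc (0:ℝ) T, ∀ x, ∀ v ∈ U, |f s x v| ≤ L)
    (hβlip : ∀ s ∈ Set.Icc (0:ℝ) T, ∀ v ∈ U, ∀ x y,
      ‖β s x v - β s y v‖ ≤ L * ⨆ u : {u : Set.Icc (0:ℝ) T // (u:ℝ) ≤ s}, ‖x u.1 - y u.1‖)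
    (hflip : ∀ s ∈ Set.Icc (0:ℝ) T, ∀ v ∈ U, ∀ x y,
      |f s x v - f s y v| ≤ L * ⨆ u : {u : Set.Icc (0:ℝ) T // (u:ℝ) ≤ s}, ‖x u.1 - y u.1‖)
    (hGbd : ∀ x, |G x| ≤ L)
    (hGlip : ∀ x y, |G x - G y| ≤ L * ‖x - y‖) :
    ∀ (t : Set.Icc (0:ℝ) T) (x : C(Set.Icc (0:ℝ) T, EuclideanSpace ℝ (Fin d)))
      (tt : Set.Icc (0:ℝ) T), t ≤ tt →
      sInf {c : ℝ | ∃ (θ : ℝ → EuclideanSpace ℝ (Fin m))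
          (X : C(Set.Icc (0:ℝ) T, EuclideanSpace ℝ (Fin d))),
          (Measurable θ ∧ ∀ s, θ s ∈ U) ∧
          ((∀ u : Set.Icc (0:ℝ) T, (u:ℝ) ≤ (t:ℝ) → X u = x u) ∧
            ∀ τ : Set.Icc (0:ℝ) T, (t:ℝ) ≤ (τ:ℝ) →
              X τ = x t + ∫ s' in (t:ℝ)..(τ:ℝ), β s' X (θ s')) ∧
          c = (∫ s' in (t:ℝ)..T, f s' X (θ s')) + G X} =
      sInf {c : ℝ | ∃ (θ : ℝ → EuclideanSpace ℝ (Fin m))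
          (X : C(Set.Icc (0:ℝ) T, EuclideanSpace ℝ (Fin d))),
          (Measurable θ ∧ ∀ s, θ s ∈ U) ∧
          ((∀ u : Set.Icc (0:ℝ) T, (u:ℝ) ≤ (t:ℝ) → X u = x u) ∧
            ∀ τ : Set.Icc (0:ℝ) T, (t:ℝ) ≤ (τ:ℝ) →
              X τ = x t + ∫ s' in (t:ℝ)..(τ:ℝ), β s' X (θ s')) ∧
          c = (∫ s' in (t:ℝ)..(tt:ℝ), f s' X (θ s')) +
            sInf {c' : ℝ | ∃ (θ' : ℝ → EuclideanSpace ℝ (Fin m))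
                (X' : C(Set.Icc (0:ℝ) T, EuclideanSpace ℝ (Fin d))),
                (Measurable θ' ∧ ∀ s, θ' s ∈ U) ∧
                ((∀ u : Set.Icc (0:ℝ) T, (u:ℝ) ≤ (tt:ℝ) → X' u = X u) ∧
                  ∀ τ : Set.Icc (0:ℝ) T, (tt:ℝ) ≤ (τ:ℝ) →
                    X' τ = X tt + ∫ s' in (tt:ℝ)..(τ:ℝ), β s' X' (θ' s')) ∧
                c' = (∫ s' in (tt:ℝ)..T, f s' X' (θ' s')) + G X'}} := by
  intro t x tt htt
  classical
  obtain ⟨ht0, htT⟩ := t.2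
  obtain ⟨htt0, httT⟩ := tt.2
  have httr : (t:ℝ) ≤ (tt:ℝ) := htt
  have hTIcc : (T:ℝ) ∈ Set.Icc (0:ℝ) T := ⟨le_of_lt hT, le_refl T⟩
  -- uIoc of two points of [0,T] is inside [0,T]
  have hsub : ∀ a b : ℝ, a ∈ Set.Icc (0:ℝ) T → b ∈ Set.Icc (0:ℝ) T →
      Set.uIoc a b ⊆ Set.Icc (0:ℝ) T := by
    intro a b ha hb s hs
    rw [Set.mem_uIoc] at hs
    rcases hs with ⟨h1, h2⟩ | ⟨h1, h2⟩
    · exact ⟨le_trans ha.1 (le_of_lt h1), le_trans h2 hb.2⟩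
    · exact ⟨le_trans hb.1 (le_of_lt h1), le_trans h2 ha.2⟩
  -- integrability of the running cost along a control
  have hfint : ∀ (θ : ℝ → EuclideanSpace ℝ (Fin m))
      (X : C(Set.Icc (0:ℝ) T, EuclideanSpace ℝ (Fin d))), Measurable θ → (∀ s, θ s ∈ U) →
      ∀ a b : ℝ, a ∈ Set.Icc (0:ℝ) T → b ∈ Set.Icc (0:ℝ) T →
      IntervalIntegrable (fun s => f s X (θ s)) volume a b := by
    intro θ X hθ hθU a b ha hb
    refine (intervalIntegrable_const (c := L) (μ := volume) (a := a) (b := b)).mono_fun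
      ((hfmeas X θ hθ).aestronglyMeasurable) ?_
    refine (ae_restrict_iff' measurableSet_uIoc).mpr (Filter.Eventually.of_forall fun s hs => ?_)
    simp only [Real.norm_eq_abs]
    exact (hfbd s (hsub a b ha hb hs) X (θ s) (hθU s)).trans (le_abs_self L)
  -- integrability of the drift along a control
  have hβint : ∀ (θ : ℝ → EuclideanSpace ℝ (Fin m))
      (X : C(Set.Icc (0:ℝ) T, EuclideanSpace ℝ (Fin d))), Measurable θ → (∀ s, θ s ∈ U) →
      ∀ a b : ℝ, a ∈ Set.Icc (0:ℝ) T → b ∈ Set.Icc (0:ℝ) T →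
      IntervalIntegrable (fun s => β s X (θ s)) volume a b := by
    intro θ X hθ hθU a b ha hb
    refine (intervalIntegrable_const (c := L) (μ := volume) (a := a) (b := b)).mono_fun
      ((hβmeas X θ hθ).aestronglyMeasurable) ?_
    refine (ae_restrict_iff' measurableSet_uIoc).mpr (Filter.Eventually.of_forall fun s hs => ?_)
    simp only [Real.norm_eq_abs]
    exact (hβbd s (hsub a b ha hb hs) X (θ s) (hθU s)).trans (le_abs_self L)
  -- bound on cost integrals
  have hfIbd : ∀ (θ : ℝ → EuclideanSpace ℝ (Fin m))
      (X : C(Set.Icc (0:ℝ) T, EuclideanSpace ℝ (Fin d))), (∀ s, θ s ∈ U) →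
      ∀ a b : ℝ, a ∈ Set.Icc (0:ℝ) T → b ∈ Set.Icc (0:ℝ) T →
      |∫ s in a..b, f s X (θ s)| ≤ L * T := by
    intro θ X hθU a b ha hb
    have h1 : ‖∫ s in a..b, f s X (θ s)‖ ≤ L * |b - a| := by
      refine intervalIntegral.norm_integral_le_of_norm_le_const fun s hs => ?_
      simp only [Real.norm_eq_abs]
      exact hfbd s (hsub a b ha hb hs) X (θ s) (hθU s)
    rw [Real.norm_eq_abs] at h1
    refine h1.trans (mul_le_mul_of_nonneg_left ?_ hL.le)
    rw [abs_le]
    constructor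
    · linarith [ha.2, hb.1]
    · linarith [ha.1, hb.2]
  -- lower bound on elements of any cost set
  have hlb : ∀ (a : Set.Icc (0:ℝ) T) (y : C(Set.Icc (0:ℝ) T, EuclideanSpace ℝ (Fin d))),
      ∀ c ∈ dppSet U β f G a y, -(L * T) - L ≤ c := by
    rintro a y c ⟨θ, X, ⟨hθ, hθU⟩, _, rfl⟩
    have h1 := hfIbd θ X hθU a T a.2 hTIcc
    have h2 := hGbd X
    have h1' := (abs_le.mp h1).1
    have h2' := (abs_le.mp h2).1
    linarith
  have hbdd : ∀ (a : Set.Icc (0:ℝ) T) (y : C(Set.Icc (0:ℝ) T, EuclideanSpace ℝ (Fin d))),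
      BddBelow (dppSet U β f G a y) := fun a y => ⟨-(L * T) - L, fun c hc => hlb a y c hc⟩
  -- restriction: a trajectory feasible at (t, x) is feasible at (tt, X) from itself
  have hrestrict : ∀ (θ : ℝ → EuclideanSpace ℝ (Fin m))
      (X : C(Set.Icc (0:ℝ) T, EuclideanSpace ℝ (Fin d))),
      Measurable θ → (∀ s, θ s ∈ U) →
      (∀ τ : Set.Icc (0:ℝ) T, (t:ℝ) ≤ (τ:ℝ) →
        X τ = x t + ∫ s' in (t:ℝ)..(τ:ℝ), β s' X (θ s')) →
      ((∫ s' in (tt:ℝ)..T, f s' X (θ s')) + G X) ∈ dppSet U β f G tt X := by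
    intro θ X hθ hθU hdyn
    refine ⟨θ, X, ⟨hθ, hθU⟩, ⟨fun u _ => rfl, fun τ hτ => ?_⟩, rfl⟩
    have h1 := hdyn τ (le_trans httr hτ)
    have h2 := hdyn tt httr
    have hadd : (∫ s in (t:ℝ)..(tt:ℝ), β s X (θ s)) + ∫ s in (tt:ℝ)..(τ:ℝ), β s X (θ s)
        = ∫ s in (t:ℝ)..(τ:ℝ), β s X (θ s) :=
      intervalIntegral.integral_add_adjacent_intervals
        (hβint θ X hθ hθU (t:ℝ) (tt:ℝ) t.2 tt.2) (hβint θ X hθ hθU (tt:ℝ) (τ:ℝ) tt.2 τ.2)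
    rw [h1, h2, ← hadd]
    abel
  -- cost splitting for a feasible trajectory
  have hsplit : ∀ (θ : ℝ → EuclideanSpace ℝ (Fin m))
      (X : C(Set.Icc (0:ℝ) T, EuclideanSpace ℝ (Fin d))),
      Measurable θ → (∀ s, θ s ∈ U) →
      (∫ s in (t:ℝ)..T, f s X (θ s)) =
        (∫ s in (t:ℝ)..(tt:ℝ), f s X (θ s)) + ∫ s in (tt:ℝ)..T, f s X (θ s) := by
    intro θ X hθ hθU
    exact (intervalIntegral.integral_add_adjacent_intervals
      (hfint θ X hθ hθU (t:ℝ) (tt:ℝ) t.2 tt.2) (hfint θ X hθ hθU (tt:ℝ) T tt.2 hTIcc)).symm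
  -- conversion of the goal to dppSet form
  show sInf (dppSet U β f G t x) =
      sInf {c : ℝ | ∃ (θ : ℝ → EuclideanSpace ℝ (Fin m))
          (X : C(Set.Icc (0:ℝ) T, EuclideanSpace ℝ (Fin d))),
          (Measurable θ ∧ ∀ s, θ s ∈ U) ∧
          ((∀ u : Set.Icc (0:ℝ) T, (u:ℝ) ≤ (t:ℝ) → X u = x u) ∧
            ∀ τ : Set.Icc (0:ℝ) T, (t:ℝ) ≤ (τ:ℝ) →
              X τ = x t + ∫ s' in (t:ℝ)..(τ:ℝ), β s' X (θ s')) ∧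
          c = (∫ s' in (t:ℝ)..(tt:ℝ), f s' X (θ s')) + sInf (dppSet U β f G tt X)}
  set R : Set ℝ := {c : ℝ | ∃ (θ : ℝ → EuclideanSpace ℝ (Fin m))
      (X : C(Set.Icc (0:ℝ) T, EuclideanSpace ℝ (Fin d))),
      (Measurable θ ∧ ∀ s, θ s ∈ U) ∧
      ((∀ u : Set.Icc (0:ℝ) T, (u:ℝ) ≤ (t:ℝ) → X u = x u) ∧
        ∀ τ : Set.Icc (0:ℝ) T, (t:ℝ) ≤ (τ:ℝ) →
          X τ = x t + ∫ s' in (t:ℝ)..(τ:ℝ), β s' X (θ s')) ∧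
      c = (∫ s' in (t:ℝ)..(tt:ℝ), f s' X (θ s')) + sInf (dppSet U β f G tt X)} with hR
  -- R is bounded below
  have hRbdd : BddBelow R := by
    refine ⟨-(L * T) + (-(L * T) - L), ?_⟩
    rintro c ⟨θ, X, ⟨hθ, hθU⟩, ⟨hinit, hdyn⟩, rfl⟩
    have h1 := hfIbd θ X hθU (t:ℝ) (tt:ℝ) t.2 tt.2
    have h1' := (abs_le.mp h1).1
    have hne : (dppSet U β f G tt X).Nonempty := ⟨_, hrestrict θ X hθ hθU hdyn⟩
    have h2 : -(L * T) - L ≤ sInf (dppSet U β f G tt X) :=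
      le_csInf hne (fun c' hc' => hlb tt X c' hc')
    have := add_le_add h1' h2
    linarith
  apply le_antisymm
  · -- sInf (dppSet t x) ≤ sInf R
    rcases R.eq_empty_or_nonempty with hRe | hRne
    · rcases (dppSet U β f G t x).eq_empty_or_nonempty with hSe | hSne
      · rw [hSe, hRe]
      · exfalso
        obtain ⟨c, θ, X, hA, hB, hc⟩ := hSne
        have : ((∫ s' in (t:ℝ)..(tt:ℝ), f s' X (θ s')) + sInf (dppSet U β f G tt X)) ∈ R :=
          ⟨θ, X, hA, hB, rfl⟩
        rw [hRe] at this
        exact this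
    · refine le_csInf hRne ?_
      rintro c ⟨θ, X, ⟨hθ, hθU⟩, ⟨hinit, hdyn⟩, rfl⟩
      -- concatenation argument: for every c' in dppSet tt X, sInf (dppSet t x) ≤ I + c'
      have hkey : ∀ c' ∈ dppSet U β f G tt X,
          sInf (dppSet U β f G t x) ≤ (∫ s' in (t:ℝ)..(tt:ℝ), f s' X (θ s')) + c' := by
        rintro c' ⟨θ', X', ⟨hθ', hθ'U⟩, ⟨hagree, hdyn'⟩, rfl⟩
        set θ'' : ℝ → EuclideanSpace ℝ (Fin m) :=
          fun s => if s ≤ (tt:ℝ) then θ s else θ' s with hθ''def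
        have hθ''m : Measurable θ'' := Measurable.ite measurableSet_Iic hθ hθ'
        have hθ''U : ∀ s, θ'' s ∈ U := by
          intro s
          by_cases h : s ≤ (tt:ℝ)
          · simp only [hθ''def, if_pos h]; exact hθU s
          · simp only [hθ''def, if_neg h]; exact hθ'U s
        -- agreement of drift integrands on [t, τ] for τ ≤ tt
        have hcongβ : ∀ τ : ℝ, (t:ℝ) ≤ τ → τ ≤ (tt:ℝ) →
            (∫ s in (t:ℝ)..τ, β s X' (θ'' s)) = ∫ s in (t:ℝ)..τ, β s X (θ s) := by
          intro τ h1 h2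
          apply intervalIntegral.integral_congr
          intro s hs
          rw [Set.uIcc_of_le h1] at hs
          have hstt : s ≤ (tt:ℝ) := le_trans hs.2 h2
          have hsIcc : s ∈ Set.Icc (0:ℝ) T := ⟨le_trans ht0 hs.1, le_trans hstt httT⟩
          simp only [hθ''def, if_pos hstt]
          exact hβna s hsIcc (θ s) (hθU s) X' X
            (fun u hu => hagree u (le_trans hu hstt))
        have hcongf : ∀ τ : ℝ, (t:ℝ) ≤ τ → τ ≤ (tt:ℝ) →
            (∫ s in (t:ℝ)..τ, f s X' (θ'' s)) = ∫ s in (t:ℝ)..τ, f s X (θ s) := by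
          intro τ h1 h2
          apply intervalIntegral.integral_congr
          intro s hs
          rw [Set.uIcc_of_le h1] at hs
          have hstt : s ≤ (tt:ℝ) := le_trans hs.2 h2
          have hsIcc : s ∈ Set.Icc (0:ℝ) T := ⟨le_trans ht0 hs.1, le_trans hstt httT⟩
          simp only [hθ''def, if_pos hstt]
          exact hfna s hsIcc (θ s) (hθU s) X' X
            (fun u hu => hagree u (le_trans hu hstt))
        -- on (tt, τ] the concatenated control is θ'
        have hcongβ2 : ∀ τ : ℝ, (tt:ℝ) ≤ τ →
            (∫ s in (tt:ℝ)..τ, β s X' (θ'' s)) = ∫ s in (tt:ℝ)..τ, β s X' (θ' s) := by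
          intro τ h2
          apply intervalIntegral.integral_congr_ae
          refine Filter.Eventually.of_forall fun s hs => ?_
          rw [Set.uIoc_of_le h2] at hs
          simp only [hθ''def, if_neg (not_le.mpr hs.1)]
        have hcongf2 : ∀ τ : ℝ, (tt:ℝ) ≤ τ →
            (∫ s in (tt:ℝ)..τ, f s X' (θ'' s)) = ∫ s in (tt:ℝ)..τ, f s X' (θ' s) := by
          intro τ h2
          apply intervalIntegral.integral_congr_ae
          refine Filter.Eventually.of_forall fun s hs => ?_
          rw [Set.uIoc_of_le h2] at hs
          simp only [hθ''def, if_neg (not_le.mpr hs.1)]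
        -- the concatenated pair is feasible at (t, x) with cost I + c'
        have hmem : ((∫ s' in (t:ℝ)..(tt:ℝ), f s' X (θ s')) +
            ((∫ s' in (tt:ℝ)..T, f s' X' (θ' s')) + G X')) ∈ dppSet U β f G t x := by
          refine ⟨θ'', X', ⟨hθ''m, hθ''U⟩, ⟨?_, ?_⟩, ?_⟩
          · intro u hu
            rw [hagree u (le_trans hu httr)]
            exact hinit u hu
          · intro τ hτ
            by_cases hcase : (τ:ℝ) ≤ (tt:ℝ)
            · rw [hagree τ hcase, hdyn τ hτ, hcongβ (τ:ℝ) hτ hcase]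
            · have htτ : (tt:ℝ) ≤ (τ:ℝ) := le_of_not_ge hcase
              have h1 := hdyn' τ htτ
              have h2 := hdyn tt httr
              have hadd : (∫ s in (t:ℝ)..(tt:ℝ), β s X' (θ'' s)) +
                  ∫ s in (tt:ℝ)..(τ:ℝ), β s X' (θ'' s)
                  = ∫ s in (t:ℝ)..(τ:ℝ), β s X' (θ'' s) :=
                intervalIntegral.integral_add_adjacent_intervals
                  (hβint θ'' X' hθ''m hθ''U (t:ℝ) (tt:ℝ) t.2 tt.2)
                  (hβint θ'' X' hθ''m hθ''U (tt:ℝ) (τ:ℝ) tt.2 τ.2)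
              rw [h1, h2, ← hadd, hcongβ (tt:ℝ) httr le_rfl, hcongβ2 (τ:ℝ) htτ]
              abel
          · have hadd : (∫ s in (t:ℝ)..(tt:ℝ), f s X' (θ'' s)) +
                ∫ s in (tt:ℝ)..T, f s X' (θ'' s)
                = ∫ s in (t:ℝ)..T, f s X' (θ'' s) :=
              intervalIntegral.integral_add_adjacent_intervals
                (hfint θ'' X' hθ''m hθ''U (t:ℝ) (tt:ℝ) t.2 tt.2)
                (hfint θ'' X' hθ''m hθ''U (tt:ℝ) T tt.2 hTIcc)
            rw [← hadd, hcongf (tt:ℝ) httr le_rfl, hcongf2 T httT]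
            ring
        have := csInf_le (hbdd t x) hmem
        linarith
      -- conclude: sInf (dppSet t x) ≤ I + sInf (dppSet tt X)
      have hne : (dppSet U β f G tt X).Nonempty := ⟨_, hrestrict θ X hθ hθU hdyn⟩
      have h2 : sInf (dppSet U β f G t x) - (∫ s' in (t:ℝ)..(tt:ℝ), f s' X (θ s')) ≤
          sInf (dppSet U β f G tt X) := by
        refine le_csInf hne fun c' hc' => ?_
        have := hkey c' hc'
        linarith
      linarith
  · -- sInf R ≤ sInf (dppSet t x)
    rcases (dppSet U β f G t x).eq_empty_or_nonempty with hSe | hSne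
    · have hRe : R = ∅ := by
        rw [Set.eq_empty_iff_forall_notMem]
        rintro c ⟨θ, X, ⟨hθ, hθU⟩, ⟨hinit, hdyn⟩, rfl⟩
        have : ((∫ s' in (t:ℝ)..T, f s' X (θ s')) + G X) ∈ dppSet U β f G t x :=
          ⟨θ, X, ⟨hθ, hθU⟩, ⟨hinit, hdyn⟩, rfl⟩
        rw [hSe] at this
        exact this
      rw [hSe, hRe]
    · refine le_csInf hSne ?_
      rintro c ⟨θ, X, ⟨hθ, hθU⟩, ⟨hinit, hdyn⟩, rfl⟩
      have hmemInner : ((∫ s' in (tt:ℝ)..T, f s' X (θ s')) + G X) ∈ dppSet U β f G tt X :=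
        hrestrict θ X hθ hθU hdyn
      have h3 : sInf (dppSet U β f G tt X) ≤ (∫ s' in (tt:ℝ)..T, f s' X (θ s')) + G X :=
        csInf_le (hbdd tt X) hmemInner
      have hmemR : ((∫ s' in (t:ℝ)..(tt:ℝ), f s' X (θ s')) + sInf (dppSet U β f G tt X)) ∈ R :=
        ⟨θ, X, ⟨hθ, hθU⟩, ⟨hinit, hdyn⟩, rfl⟩
      have h4 := csInf_le hRbdd hmemR
      have h5 := hsplit θ X hθ hθU
      linarith
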